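/- For matrices A ∈ ℝ^{n×h} and B ∈ ℝ^{m×h}, define the linear operator T : ℝ^{n×m} → ℝ^{(n+m)×h} by T(U) = [U·B ; Uᵀ·A] (stacking U·B on top of Uᵀ·A). Then the smallest singular value of T satisfies σ_min(T)² = σ_min(A)² + σ_min(B)², and the largest singular value satisfies σ_max(T)² = σ_max(A)² + σ_max(B)². -/

import Mathlib

open Matrix

/-- Frobenius norm of a real matrix. -/
noncomputable def fro {a b : ℕ} (A : Matrix (Fin a) (Fin b) ℝ) : ℝ :=
  Real.sqrt (∑ i, ∑ j, (A i j) ^ 2)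

/-- Frobenius (trace) inner product of two real matrices. -/
noncomputable def ip {a b : ℕ} (A B : Matrix (Fin a) (Fin b) ℝ) : ℝ :=
  ∑ i, ∑ j, A i j * B i j

/-- Square of the largest singular value of `A`: largest eigenvalue of `Aᴴ * A`. -/
noncomputable def smaxSq {a b : ℕ} (A : Matrix (Fin a) (Fin b) ℝ) : ℝ :=
  ⨆ i, (show (Aᵀ * A).IsHermitian by
    simpa using Matrix.isHermitian_conjTranspose_mul_self A).eigenvalues i

/-- Square of the smallest singular value of `A` (as the smallest eigenvalue of `Aᴴ * A`;
zero when `A` is rank-deficient as a map out of its column space). -/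
noncomputable def sminSq {a b : ℕ} (A : Matrix (Fin a) (Fin b) ℝ) : ℝ :=
  ⨅ i, (show (Aᵀ * A).IsHermitian by
    simpa using Matrix.isHermitian_conjTranspose_mul_self A).eigenvalues i

/-- Square of the largest singular value via `A * Aᴴ`. -/
noncomputable def smaxSqR {a b : ℕ} (A : Matrix (Fin a) (Fin b) ℝ) : ℝ :=
  ⨆ i, (Matrix.isHermitian_mul_conjTranspose_self A).eigenvalues i

/-- Square of the smallest singular value via `A * Aᴴ` (the `min(a,b)`-th singular value
when `a ≤ b`). -/
noncomputable def sminSqR {a b : ℕ} (A : Matrix (Fin a) (Fin b) ℝ) : ℝ :=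
  ⨅ i, (Matrix.isHermitian_mul_conjTranspose_self A).eigenvalues i

/-- Largest singular value. -/
noncomputable def smax {a b : ℕ} (A : Matrix (Fin a) (Fin b) ℝ) : ℝ :=
  Real.sqrt (smaxSq A)


lemma row_quad {b c : ℕ} (x : Fin b → ℝ) (B : Matrix (Fin b) (Fin c) ℝ) :
    ∑ j, (∑ k, x k * B k j) ^ 2 = x ⬝ᵥ ((B * Bᴴ) *ᵥ x) := by
  simp only [dotProduct, mulVec, mul_apply, conjTranspose_apply, pow_two, Finset.sum_mul,
    Finset.mul_sum, star_trivial]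
  rw [Finset.sum_comm]
  congr 1; ext k
  rw [Finset.sum_comm]
  congr 1; ext l
  congr 1; ext j
  ring

lemma fro_sq {a b : ℕ} (M : Matrix (Fin a) (Fin b) ℝ) :
    fro M ^ 2 = ∑ i, ∑ j, M i j ^ 2 :=
  Real.sq_sqrt (by positivity)

lemma f_eq {n m h : ℕ} (A : Matrix (Fin n) (Fin h) ℝ) (B : Matrix (Fin m) (Fin h) ℝ)
    (U : Matrix (Fin n) (Fin m) ℝ) :
    fro (U * B) ^ 2 + fro (Uᵀ * A) ^ 2
      = (∑ i, U i ⬝ᵥ ((B * Bᴴ) *ᵥ U i)) + ∑ j, Uᵀ j ⬝ᵥ ((A * Aᴴ) *ᵥ Uᵀ j) := by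
  rw [fro_sq, fro_sq]
  congr 1
  · refine Finset.sum_congr rfl fun i _ => ?_
    rw [← row_quad]
    exact Finset.sum_congr rfl fun j _ => by rw [mul_apply]
  · refine Finset.sum_congr rfl fun j _ => ?_
    rw [← row_quad]
    exact Finset.sum_congr rfl fun l _ => by rw [mul_apply]

lemma quad_eq {a : ℕ} {M : Matrix (Fin a) (Fin a) ℝ} (hM : M.IsHermitian) (x : Fin a → ℝ) :
    ∃ y : Fin a → ℝ, (∑ i, x i ^ 2 = ∑ i, y i ^ 2) ∧
      x ⬝ᵥ (M *ᵥ x) = ∑ i, hM.eigenvalues i * y i ^ 2 := by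
  classical
  set V : Matrix (Fin a) (Fin a) ℝ := (hM.eigenvectorUnitary : Matrix (Fin a) (Fin a) ℝ) with hV
  have hstar : star V = Vᵀ := by
    ext i j; simp [Matrix.star_apply]
  have hVV : V * Vᵀ = 1 := by
    rw [← hstar]; exact mem_unitaryGroup_iff.mp (hM.eigenvectorUnitary).2
  refine ⟨Vᵀ *ᵥ x, ?_, ?_⟩
  · have h1 : ∀ z : Fin a → ℝ, ∑ i, z i ^ 2 = z ⬝ᵥ z := by
      intro z; simp [dotProduct, pow_two]
    rw [h1, h1, dotProduct_mulVec, vecMul_transpose, mulVec_mulVec, hVV, one_mulVec]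
  · have hspec := hM.spectral_theorem
    rw [Unitary.conjStarAlgAut_apply, ← hV, hstar] at hspec
    conv_lhs => rw [hspec]
    rw [← mulVec_mulVec, ← mulVec_mulVec, dotProduct_mulVec, ← mulVec_transpose]
    have h2 : (RCLike.ofReal ∘ hM.eigenvalues : Fin a → ℝ) = hM.eigenvalues := by
      ext i; simp
    rw [h2]
    simp only [dotProduct, mulVec_diagonal, pow_two, mulVec_transpose]
    congr 1; ext i; ring

lemma rayleigh {a : ℕ} (_ha : 0 < a) {M : Matrix (Fin a) (Fin a) ℝ} (hM : M.IsHermitian)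
    (x : Fin a → ℝ) :
    (⨅ i, hM.eigenvalues i) * ∑ i, x i ^ 2 ≤ x ⬝ᵥ (M *ᵥ x) ∧
    x ⬝ᵥ (M *ᵥ x) ≤ (⨆ i, hM.eigenvalues i) * ∑ i, x i ^ 2 := by
  haveI : Nonempty (Fin a) := ⟨⟨0, _ha⟩⟩
  obtain ⟨y, hxy, hq⟩ := quad_eq hM x
  rw [hq, hxy, Finset.mul_sum, Finset.mul_sum]
  constructor
  · exact Finset.sum_le_sum fun i _ =>
      mul_le_mul_of_nonneg_right (ciInf_le (Finite.bddBelow_range _) i) (sq_nonneg _)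
  · exact Finset.sum_le_sum fun i _ =>
      mul_le_mul_of_nonneg_right (le_ciSup (Finite.bddAbove_range _) i) (sq_nonneg _)

lemma eigen_vec {a : ℕ} {M : Matrix (Fin a) (Fin a) ℝ} (hM : M.IsHermitian) (i : Fin a) :
    ∃ v : Fin a → ℝ, (∑ j, v j ^ 2 = 1) ∧ v ⬝ᵥ (M *ᵥ v) = hM.eigenvalues i := by
  have h2 : ∑ j, (hM.eigenvectorBasis i) j ^ 2 = 1 := by
    have h := hM.eigenvectorBasis.orthonormal.1 i
    rw [EuclideanSpace.norm_eq] at h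
    have h3 := Real.sqrt_eq_one.mp h
    simpa [Real.norm_eq_abs, sq_abs] using h3
  refine ⟨⇑(hM.eigenvectorBasis i), ?_, ?_⟩
  · simpa using h2
  · rw [hM.mulVec_eigenvectorBasis, dotProduct_smul]
    have hvv : (⇑(hM.eigenvectorBasis i) : Fin a → ℝ) ⬝ᵥ ⇑(hM.eigenvectorBasis i) = 1 := by
      simpa [dotProduct, sq] using h2
    rw [hvv]; simp


/-- For `A ∈ ℝ^{n×h}`, `B ∈ ℝ^{m×h}` and the operator `T(U) = [U·B ; Uᵀ·A]`,
the extreme squared singular values of `T` (the extremal values of `‖T U‖_F²` over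
unit-Frobenius-norm `U`) are `σ_min(A)² + σ_min(B)²` and `σ_max(A)² + σ_max(B)²`. -/
theorem stmt0 (n m h : ℕ) (hn : 0 < n) (hm : 0 < m)
    (A : Matrix (Fin n) (Fin h) ℝ) (B : Matrix (Fin m) (Fin h) ℝ) :
    sInf {r : ℝ | ∃ U : Matrix (Fin n) (Fin m) ℝ, fro U = 1 ∧
        r = fro (U * B) ^ 2 + fro (Uᵀ * A) ^ 2}
      = sminSqR A + sminSqR B ∧
    sSup {r : ℝ | ∃ U : Matrix (Fin n) (Fin m) ℝ, fro U = 1 ∧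
        r = fro (U * B) ^ 2 + fro (Uᵀ * A) ^ 2}
      = smaxSqR A + smaxSqR B := by
  classical
  haveI : Nonempty (Fin n) := ⟨⟨0, hn⟩⟩
  haveI : Nonempty (Fin m) := ⟨⟨0, hm⟩⟩
  have hA := Matrix.isHermitian_mul_conjTranspose_self A
  have hB := Matrix.isHermitian_mul_conjTranspose_self B
  have hsmin : sminSqR A = ⨅ i, hA.eigenvalues i := rfl
  have hsminB : sminSqR B = ⨅ i, hB.eigenvalues i := rfl
  have hsmax : smaxSqR A = ⨆ i, hA.eigenvalues i := rfl
  have hsmaxB : smaxSqR B = ⨆ i, hB.eigenvalues i := rfl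
  have key : ∀ U : Matrix (Fin n) (Fin m) ℝ, fro U = 1 →
      sminSqR A + sminSqR B ≤ fro (U * B) ^ 2 + fro (Uᵀ * A) ^ 2 ∧
      fro (U * B) ^ 2 + fro (Uᵀ * A) ^ 2 ≤ smaxSqR A + smaxSqR B := by
    intro U hU
    have hU1 : ∑ i, ∑ j, U i j ^ 2 = 1 := Real.sqrt_eq_one.mp hU
    have hU2 : ∑ j, ∑ i, U i j ^ 2 = 1 := by rw [Finset.sum_comm]; exact hU1
    rw [f_eq A B U]
    have hrow_lo : sminSqR B ≤ ∑ i, U i ⬝ᵥ ((B * Bᴴ) *ᵥ U i) := by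
      calc sminSqR B = ∑ i, sminSqR B * ∑ j, U i j ^ 2 := by
            rw [← Finset.mul_sum, hU1, mul_one]
        _ ≤ _ := Finset.sum_le_sum fun i _ => (rayleigh hm hB (U i)).1
    have hrow_hi : ∑ i, U i ⬝ᵥ ((B * Bᴴ) *ᵥ U i) ≤ smaxSqR B := by
      calc ∑ i, U i ⬝ᵥ ((B * Bᴴ) *ᵥ U i)
          ≤ ∑ i, smaxSqR B * ∑ j, U i j ^ 2 :=
            Finset.sum_le_sum fun i _ => (rayleigh hm hB (U i)).2
        _ = smaxSqR B := by rw [← Finset.mul_sum, hU1, mul_one]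
    have hcol_lo : sminSqR A ≤ ∑ j, Uᵀ j ⬝ᵥ ((A * Aᴴ) *ᵥ Uᵀ j) := by
      calc sminSqR A = ∑ j, sminSqR A * ∑ i, Uᵀ j i ^ 2 := by
            simp only [transpose_apply]
            rw [← Finset.mul_sum, hU2, mul_one]
        _ ≤ _ := Finset.sum_le_sum fun j _ => (rayleigh hn hA (Uᵀ j)).1
    have hcol_hi : ∑ j, Uᵀ j ⬝ᵥ ((A * Aᴴ) *ᵥ Uᵀ j) ≤ smaxSqR A := by
      calc ∑ j, Uᵀ j ⬝ᵥ ((A * Aᴴ) *ᵥ Uᵀ j)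
          ≤ ∑ j, smaxSqR A * ∑ i, Uᵀ j i ^ 2 :=
            Finset.sum_le_sum fun j _ => (rayleigh hn hA (Uᵀ j)).2
        _ = smaxSqR A := by
            simp only [transpose_apply]
            rw [← Finset.mul_sum, hU2, mul_one]
    constructor <;> linarith
  have attain : ∀ (iA : Fin n) (iB : Fin m),
      hA.eigenvalues iA + hB.eigenvalues iB ∈
        {r : ℝ | ∃ U : Matrix (Fin n) (Fin m) ℝ, fro U = 1 ∧
          r = fro (U * B) ^ 2 + fro (Uᵀ * A) ^ 2} := by
    intro iA iB
    obtain ⟨u, hu1, hu2⟩ := eigen_vec hA iA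
    obtain ⟨v, hv1, hv2⟩ := eigen_vec hB iB
    refine ⟨fun i j => u i * v j, ?_, ?_⟩
    · have h1 : ∑ i, ∑ j, (u i * v j) ^ 2 = 1 := by
        simp only [mul_pow, ← Finset.mul_sum, hv1, mul_one]
        exact hu1
      show Real.sqrt _ = 1
      rw [show (∑ i, ∑ j, ((fun i j => u i * v j) : Matrix (Fin n) (Fin m) ℝ) i j ^ 2)
        = ∑ i, ∑ j, (u i * v j) ^ 2 from rfl, h1, Real.sqrt_one]
    · refine Eq.trans ?_ (f_eq A B _).symm
      have hrow : ∀ i : Fin n, (fun j => u i * v j) ⬝ᵥ ((B * Bᴴ) *ᵥ fun j => u i * v j)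
          = u i ^ 2 * hB.eigenvalues iB := by
        intro i
        have hv : (fun j => u i * v j) = u i • v := by ext j; simp
        rw [hv, mulVec_smul, smul_dotProduct, dotProduct_smul, hv2, smul_eq_mul, smul_eq_mul, sq]
        ring
      have hcol : ∀ j : Fin m, (fun k => u k * v j) ⬝ᵥ ((A * Aᴴ) *ᵥ fun k => u k * v j)
          = v j ^ 2 * hA.eigenvalues iA := by
        intro j
        have hv : (fun k => u k * v j) = v j • u := by ext k; simp [mul_comm]
        rw [hv, mulVec_smul, smul_dotProduct, dotProduct_smul, hu2, smul_eq_mul, smul_eq_mul, sq]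
        ring
      have e1 : ∑ i, ((fun i j => u i * v j) : Matrix (Fin n) (Fin m) ℝ) i ⬝ᵥ
          ((B * Bᴴ) *ᵥ ((fun i j => u i * v j) : Matrix (Fin n) (Fin m) ℝ) i)
          = hB.eigenvalues iB := by
        calc _ = ∑ i, u i ^ 2 * hB.eigenvalues iB :=
              Finset.sum_congr rfl fun i _ => hrow i
          _ = _ := by rw [← Finset.sum_mul, hu1, one_mul]
      have e2 : ∑ j, (((fun i j => u i * v j) : Matrix (Fin n) (Fin m) ℝ)ᵀ) j ⬝ᵥ
          ((A * Aᴴ) *ᵥ (((fun i j => u i * v j) : Matrix (Fin n) (Fin m) ℝ)ᵀ) j)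
          = hA.eigenvalues iA := by
        calc _ = ∑ j, v j ^ 2 * hA.eigenvalues iA :=
              Finset.sum_congr rfl fun j _ => hcol j
          _ = _ := by rw [← Finset.sum_mul, hv1, one_mul]
      rw [e1, e2]; exact add_comm _ _
  obtain ⟨iA, hiA⟩ := exists_eq_ciInf_of_finite (f := hA.eigenvalues)
  obtain ⟨iB, hiB⟩ := exists_eq_ciInf_of_finite (f := hB.eigenvalues)
  obtain ⟨jA, hjA⟩ := exists_eq_ciSup_of_finite (f := hA.eigenvalues)
  obtain ⟨jB, hjB⟩ := exists_eq_ciSup_of_finite (f := hB.eigenvalues)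
  have memmin : sminSqR A + sminSqR B ∈
      {r : ℝ | ∃ U : Matrix (Fin n) (Fin m) ℝ, fro U = 1 ∧
        r = fro (U * B) ^ 2 + fro (Uᵀ * A) ^ 2} := by
    have := attain iA iB
    rwa [hiA, hiB, ← hsmin, ← hsminB] at this
  have memmax : smaxSqR A + smaxSqR B ∈
      {r : ℝ | ∃ U : Matrix (Fin n) (Fin m) ℝ, fro U = 1 ∧
        r = fro (U * B) ^ 2 + fro (Uᵀ * A) ^ 2} := by
    have := attain jA jB
    rwa [hjA, hjB, ← hsmax, ← hsmaxB] at this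
  constructor
  · refine le_antisymm (csInf_le ⟨sminSqR A + sminSqR B, ?_⟩ memmin) (le_csInf ⟨_, memmin⟩ ?_)
    · rintro r ⟨U, hU, rfl⟩; exact (key U hU).1
    · rintro r ⟨U, hU, rfl⟩; exact (key U hU).1
  · refine le_antisymm (csSup_le ⟨_, memmax⟩ ?_) (le_csSup ⟨smaxSqR A + smaxSqR B, ?_⟩ memmax)
    · rintro r ⟨U, hU, rfl⟩; exact (key U hU).2
    · rintro r ⟨U, hU, rfl⟩; exact (key U hU).2
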